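/- arXiv:2201.12494 — 3 statements merged into one kernel-verified Lean document; each statement's English description precedes it below -/
import Mathlib

section
/- Let ψ : [0,1] → ℝ be continuous, real-valued, and not identically zero, and let (λ_n) be a real sequence with λ_n → +∞. Then limsup_{n→∞} |∫_0^1 exp(i λ_n ∫_0^x ψ(w) dw) dx| < 1. -/
open Filter MeasureTheory Set Complex Real
open scoped Topology FourierTransform

lemma aux_pos (g : ℝ → ℝ) (hg : Continuous g) {a b : ℝ} (hab : a < b)
    (hpos : ∀ x ∈ Icc a b, 0 < g x) (lam : ℕ → ℝ) (hlam : Tendsto lam atTop (cocompact ℝ)) :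
    Tendsto (fun n => ∫ x in a..b,
      Complex.exp (Complex.I * (lam n : ℂ) * ((∫ w in (0:ℝ)..x, g w : ℝ) : ℂ))) atTop (𝓝 0) := by
  set Φ : ℝ → ℝ := fun x => ∫ w in (0:ℝ)..x, g w with hΦdef
  have hΦd : ∀ x : ℝ, HasDerivAt Φ (g x) x := fun x =>
    intervalIntegral.integral_hasDerivAt_right (hg.intervalIntegrable _ _)
      (hg.stronglyMeasurableAtFilter _ _) hg.continuousAt
  have hΦc : Continuous Φ := continuous_iff_continuousAt.2 fun x => (hΦd x).continuousAt
  -- strict monotonicity on [a,b]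
  have hmono : StrictMonoOn Φ (Icc a b) := by
    apply strictMonoOn_of_deriv_pos (convex_Icc a b) hΦc.continuousOn
    intro x hx
    rw [interior_Icc] at hx
    rw [(hΦd x).deriv]
    exact hpos x (Set.mem_Icc_of_Ioo hx)
  have hinj : InjOn Φ (Icc a b) := hmono.injOn
  -- image is Icc (Φ a) (Φ b)
  have himg : Φ '' Icc a b = Icc (Φ a) (Φ b) := by
    apply Subset.antisymm
    · rintro _ ⟨x, hx, rfl⟩
      exact ⟨hmono.monotoneOn (left_mem_Icc.2 hab.le) hx hx.1,
        hmono.monotoneOn hx (right_mem_Icc.2 hab.le) hx.2⟩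
    · exact intermediate_value_Icc hab.le hΦc.continuousOn
  -- monotone inverse
  set Φinv : ℝ → ℝ := fun u => sSup (insert a {x ∈ Icc a b | Φ x ≤ u}) with hΦinvdef
  have hbdd : ∀ u : ℝ, BddAbove (insert a {x ∈ Icc a b | Φ x ≤ u}) := by
    intro u
    refine ⟨b, ?_⟩
    rintro x (rfl | ⟨hx, -⟩)
    · exact hab.le
    · exact hx.2
  have hΦinv_mono : Monotone Φinv := by
    intro u v huv
    apply csSup_le_csSup (hbdd v) ⟨a, mem_insert _ _⟩
    rintro x (rfl | ⟨hx1, hx2⟩)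
    · exact mem_insert _ _
    · exact mem_insert_of_mem _ ⟨hx1, hx2.trans huv⟩
  have hleft : ∀ x ∈ Icc a b, Φinv (Φ x) = x := by
    intro x hx
    apply IsGreatest.csSup_eq
    constructor
    · exact mem_insert_of_mem _ ⟨hx, le_rfl⟩
    · rintro y (rfl | ⟨hy1, hy2⟩)
      · exact hx.1
      · by_contra h
        push_neg at h
        exact absurd hy2 (not_le.2 (hmono hx hy1 h))
  -- lower bound for g on [a,b]
  obtain ⟨xm, hxm, hxmmin⟩ := isCompact_Icc.exists_isMinOn (nonempty_Icc.2 hab.le)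
    (hg.continuousOn (s := Icc a b))
  set c : ℝ := g xm with hcdef
  have hc : 0 < c := hpos xm hxm
  have hcle : ∀ x ∈ Icc a b, c ≤ g x := fun x hx => hxmmin hx
  -- the density
  set Gc : ℝ → ℂ := fun u => ((g (Φinv u))⁻¹ : ℝ) with hGcdef
  set F : ℝ → ℂ := (Icc (Φ a) (Φ b)).indicator Gc with hFdef
  have hΦinv_mem : ∀ u ∈ Icc (Φ a) (Φ b), Φinv u ∈ Icc a b := by
    intro u hu
    constructor
    · exact le_csSup (hbdd u) (mem_insert _ _)
    · apply csSup_le ⟨a, mem_insert _ _⟩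
      rintro y (rfl | ⟨hy1, -⟩)
      · exact hab.le
      · exact hy1.2
  have hGc_meas : Measurable Gc :=
    Complex.measurable_ofReal.comp ((hg.measurable.comp hΦinv_mono.measurable).inv)
  have hF_int : Integrable F := by
    rw [hFdef]
    apply (Measure.integrableOn_of_bounded (M := c⁻¹) (by
        simp [Real.volume_Icc]) hGc_meas.aestronglyMeasurable ?_).integrable_indicator
        measurableSet_Icc
    · filter_upwards [ae_restrict_mem measurableSet_Icc] with u hu
      have h1 := hΦinv_mem u hu
      have h2 : 0 < g (Φinv u) := hpos _ h1
      simp only [hGcdef, Complex.norm_real, Real.norm_eq_abs, abs_inv, abs_of_pos h2]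
      exact inv_anti₀ hc (hcle _ h1)
  -- Riemann-Lebesgue
  have hRL := Real.tendsto_integral_exp_smul_cocompact F
  have hw : Tendsto (fun n => -(lam n / (2 * π))) atTop (cocompact ℝ) := by
    have h1 : Tendsto (fun x : ℝ => x * (-(2 * π))⁻¹) (cocompact ℝ) (cocompact ℝ) :=
      Filter.tendsto_cocompact_mul_right₀ (inv_ne_zero (by simp [Real.pi_ne_zero]))
    have heq : (fun n => -(lam n / (2 * π))) = (fun x : ℝ => x * (-(2 * π))⁻¹) ∘ lam := by
      funext n
      simp only [Function.comp_apply, div_eq_mul_inv]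
      ring
    rw [heq]
    exact h1.comp hlam
  have key := hRL.comp hw
  simp only [Function.comp_def] at key
  -- identify the integrals
  convert key using 2 with n
  set lc : ℝ := lam n with hlc
  have hid : ∀ v : ℝ, (𝐞 (-(v * -(lc / (2 * π)))) • F v : ℂ)
      = Complex.exp (Complex.I * lc * v) * F v := by
    intro v
    rw [Circle.smul_def, Real.fourierChar_apply]
    congr 2
    rw [show 2 * π * -(v * -(lc / (2 * π))) = lc * v from by field_simp]
    push_cast
    ring
  simp only [hid]
  have hind : (fun v : ℝ => Complex.exp (Complex.I * lc * v) * F v)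
      = (Icc (Φ a) (Φ b)).indicator (fun v => Complex.exp (Complex.I * lc * v) * Gc v) := by
    funext v
    rw [hFdef]
    by_cases h : v ∈ Icc (Φ a) (Φ b) <;>
      simp [Set.indicator_of_mem, Set.indicator_of_notMem, h]
  rw [hind, integral_indicator measurableSet_Icc, ← himg,
    integral_image_eq_integral_abs_deriv_smul measurableSet_Icc
      (fun x hx => (hΦd x).hasDerivWithinAt) hinj,
    intervalIntegral.integral_of_le hab.le, ← integral_Icc_eq_integral_Ioc]
  apply setIntegral_congr_fun measurableSet_Icc
  intro x hx
  have hgx : (0:ℝ) < g x := hpos x hx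
  have hgx' : (g x : ℂ) ≠ 0 := by exact_mod_cast hgx.ne'
  simp only [hGcdef, hleft x hx, Complex.real_smul, abs_of_pos hgx]
  push_cast
  field_simp
  rfl

/-- Stationary-phase lemma: for a continuous, not identically zero `ψ : [0,1] → ℝ` and a real
sequence `λ_n → +∞`, `limsup_n |∫_0^1 exp(i λ_n ∫_0^x ψ) dx| < 1`. -/
theorem stmt0 (ψ : ℝ → ℝ) (hψ : ContinuousOn ψ (Icc 0 1))
    (hne : ∃ x ∈ Icc (0:ℝ) 1, ψ x ≠ 0)
    (lam : ℕ → ℝ) (hlam : Tendsto lam atTop atTop) :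
    Filter.limsup
      (fun n => ‖∫ x in (0:ℝ)..1,
        Complex.exp (Complex.I * (lam n : ℂ) * ((∫ w in (0:ℝ)..x, ψ w : ℝ) : ℂ))‖)
      atTop < 1 := by
  -- continuous extension of ψ
  set r : ℝ → ℝ := fun x => max 0 (min 1 x) with hrdef
  have hrc : Continuous r := continuous_const.max (continuous_const.min continuous_id)
  have hrmem : ∀ x, r x ∈ Icc (0:ℝ) 1 :=
    fun x => ⟨le_max_left _ _, max_le zero_le_one (min_le_left _ _)⟩
  set g : ℝ → ℝ := fun x => ψ (r x) with hgdef
  have hgc : Continuous g := hψ.comp_continuous hrc hrmem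
  have hg_eq : ∀ x ∈ Icc (0:ℝ) 1, g x = ψ x := by
    intro x hx
    simp only [hgdef, hrdef]
    rw [min_eq_right hx.2, max_eq_right hx.1]
  -- rewrite the outer integral using g
  have hout : ∀ lc : ℝ, (∫ x in (0:ℝ)..1,
        Complex.exp (Complex.I * (lc : ℂ) * ((∫ w in (0:ℝ)..x, ψ w : ℝ) : ℂ)))
      = ∫ x in (0:ℝ)..1,
        Complex.exp (Complex.I * (lc : ℂ) * ((∫ w in (0:ℝ)..x, g w : ℝ) : ℂ)) := by
    intro lc
    apply intervalIntegral.integral_congr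
    intro x hx
    rw [uIcc_of_le zero_le_one] at hx
    have hin : (∫ w in (0:ℝ)..x, ψ w) = ∫ w in (0:ℝ)..x, g w := by
      apply intervalIntegral.integral_congr
      intro w hw
      rw [uIcc_of_le hx.1] at hw
      exact (hg_eq w ⟨hw.1, hw.2.trans hx.2⟩).symm
    simp only [hin]
  -- find a good interval [a, b]
  obtain ⟨x₀, hx₀, hψx₀⟩ := hne
  have hgx₀ : g x₀ ≠ 0 := by rw [hg_eq x₀ hx₀]; exact hψx₀
  obtain ⟨δ, hδ, hball⟩ := Metric.continuousAt_iff.1 hgc.continuousAt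
    (|g x₀| / 2) (by positivity)
  set a : ℝ := max 0 (x₀ - δ/2) with hadef
  set b : ℝ := min 1 (x₀ + δ/2) with hbdef
  have hab : a < b := by
    apply max_lt
    · exact lt_min zero_lt_one (by linarith [hx₀.1])
    · exact lt_min (by linarith [hx₀.2]) (by linarith)
  have ha0 : (0:ℝ) ≤ a := le_max_left _ _
  have hb1 : b ≤ 1 := min_le_left _ _
  have hnear : ∀ x ∈ Icc a b, |g x - g x₀| < |g x₀| / 2 := by
    intro x hx
    have h1 : x₀ - δ/2 ≤ x := le_trans (le_max_right _ _) hx.1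
    have h2 : x ≤ x₀ + δ/2 := le_trans hx.2 (min_le_right _ _)
    have : dist x x₀ < δ := by
      rw [Real.dist_eq, abs_lt]; constructor <;> linarith
    simpa [Real.dist_eq] using hball this
  -- middle integral tends to 0
  have hmid : Tendsto (fun n => ∫ x in a..b,
      Complex.exp (Complex.I * (lam n : ℂ) * ((∫ w in (0:ℝ)..x, g w : ℝ) : ℂ))) atTop (𝓝 0) := by
    rcases lt_or_gt_of_ne hgx₀ with hneg | hposi
    · -- negative case: use -g and -lam
      have hp : ∀ x ∈ Icc a b, 0 < -g x := by
        intro x hx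
        have h1 := abs_lt.1 (hnear x hx)
        rw [abs_of_neg hneg] at h1
        linarith [h1.2]
      have hlam' : Tendsto (fun n => -lam n) atTop (cocompact ℝ) := by
        rw [cocompact_eq_atBot_atTop]
        exact (tendsto_neg_atTop_atBot.comp hlam).mono_right le_sup_left
      have h0 := aux_pos (fun x => -g x) hgc.neg hab hp (fun n => -lam n) hlam'
      convert h0 using 2 with n
      apply intervalIntegral.integral_congr
      intro x _
      have hneg' : (∫ w in (0:ℝ)..x, -g w) = -∫ w in (0:ℝ)..x, g w := by
        simpa using intervalIntegral.integral_neg (f := g) (a := 0) (b := x)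
      simp only [hneg']
      push_cast
      ring_nf
    · have hp : ∀ x ∈ Icc a b, 0 < g x := by
        intro x hx
        have h1 := abs_lt.1 (hnear x hx)
        rw [abs_of_pos hposi] at h1
        linarith [h1.1]
      have hlam' : Tendsto lam atTop (cocompact ℝ) := by
        rw [cocompact_eq_atBot_atTop]
        exact hlam.mono_right le_sup_right
      exact aux_pos g hgc hab hp lam hlam'
  -- continuity and norm facts
  have hΦc : Continuous (fun x : ℝ => ∫ w in (0:ℝ)..x, g w) :=
    intervalIntegral.continuous_primitive (fun u v => hgc.intervalIntegrable u v) 0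
  have hcont : ∀ lc : ℝ, Continuous (fun x : ℝ =>
      Complex.exp (Complex.I * (lc : ℂ) * ((∫ w in (0:ℝ)..x, g w : ℝ) : ℂ))) := by
    intro lc
    exact Complex.continuous_exp.comp
      (continuous_const.mul (Complex.continuous_ofReal.comp hΦc))
  have hnorm1 : ∀ (lc : ℝ) (t : ℝ), ‖Complex.exp (Complex.I * (lc : ℂ) * (t : ℂ))‖ = 1 := by
    intro lc t
    rw [Complex.norm_exp]
    simp [Complex.mul_re]
  -- splitting bound
  have hbound : ∀ n, ‖∫ x in (0:ℝ)..1,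
        Complex.exp (Complex.I * (lam n : ℂ) * ((∫ w in (0:ℝ)..x, g w : ℝ) : ℂ))‖
      ≤ (1 - (b - a)) + ‖∫ x in a..b,
        Complex.exp (Complex.I * (lam n : ℂ) * ((∫ w in (0:ℝ)..x, g w : ℝ) : ℂ))‖ := by
    intro n
    set f : ℝ → ℂ := fun x =>
      Complex.exp (Complex.I * (lam n : ℂ) * ((∫ w in (0:ℝ)..x, g w : ℝ) : ℂ)) with hfdef
    have hii : ∀ u v : ℝ, IntervalIntegrable f volume u v :=
      fun u v => (hcont (lam n)).intervalIntegrable u v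
    have e1 := intervalIntegral.integral_add_adjacent_intervals (hii 0 a) (hii a b)
    have e2 := intervalIntegral.integral_add_adjacent_intervals (hii 0 b) (hii b 1)
    have hsplit : (∫ x in (0:ℝ)..1, f x)
        = (∫ x in (0:ℝ)..a, f x) + (∫ x in a..b, f x) + (∫ x in b..(1:ℝ), f x) := by
      rw [e1, e2]
    have hn1 : ‖∫ x in (0:ℝ)..a, f x‖ ≤ a := by
      have := intervalIntegral.norm_integral_le_of_norm_le_const
        (C := 1) (a := (0:ℝ)) (b := a) (f := f) (fun x _ => le_of_eq (hnorm1 (lam n) _))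
      simpa [_root_.abs_of_nonneg ha0] using this
    have hn3 : ‖∫ x in b..(1:ℝ), f x‖ ≤ 1 - b := by
      have := intervalIntegral.norm_integral_le_of_norm_le_const
        (C := 1) (a := b) (b := (1:ℝ)) (f := f) (fun x _ => le_of_eq (hnorm1 (lam n) _))
      simpa [_root_.abs_of_nonneg (by linarith : (0:ℝ) ≤ 1 - b)] using this
    calc ‖∫ x in (0:ℝ)..1, f x‖
        ≤ ‖∫ x in (0:ℝ)..a, f x‖ + ‖∫ x in a..b, f x‖ + ‖∫ x in b..(1:ℝ), f x‖ := by
          rw [hsplit]; exact (norm_add_le _ _).trans (by gcongr; exact norm_add_le _ _)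
      _ ≤ (1 - (b - a)) + ‖∫ x in a..b, f x‖ := by linarith
  -- conclude
  have hεpos : 0 < (b - a) / 2 := by linarith
  have hev : ∀ᶠ n in atTop, ‖∫ x in (0:ℝ)..1,
      Complex.exp (Complex.I * (lam n : ℂ) * ((∫ w in (0:ℝ)..x, ψ w : ℝ) : ℂ))‖
      ≤ 1 - (b - a) / 2 := by
    have h0' : Tendsto (fun n => ‖∫ x in a..b,
        Complex.exp (Complex.I * (lam n : ℂ) * ((∫ w in (0:ℝ)..x, g w : ℝ) : ℂ))‖)
        atTop (𝓝 0) := by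
      simpa using hmid.norm
    filter_upwards [h0'.eventually (gt_mem_nhds hεpos)] with n hn
    rw [hout (lam n)]
    have := hbound n
    linarith
  have hls : Filter.limsup
      (fun n => ‖∫ x in (0:ℝ)..1,
        Complex.exp (Complex.I * (lam n : ℂ) * ((∫ w in (0:ℝ)..x, ψ w : ℝ) : ℂ))‖)
      atTop ≤ 1 - (b - a) / 2 := by
    apply Filter.limsup_le_of_le
    · exact isCoboundedUnder_le_of_le atTop (fun n => norm_nonneg _)
    · exact hev
  linarith
end

section
/- Let b₁, b₂ : [0,1] → ℝ be continuous and nowhere vanishing, let c ∈ ℝ with c ≠ 0, and let J₁ : [0,1] → ℝ be a C¹ solution of J₁'(x) = -(b₁(x)⁻¹ + b₂(x)⁻¹) J₁(x) + b₂(x)⁻¹ c satisfying J₁(0) = J₁(1). Then J₁ does not change sign on [0,1]: either J₁(x) ≥ 0 for all x or J₁(x) ≤ 0 for all x. -/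
open Filter MeasureTheory Set

/-- A continuous, nowhere vanishing function on `[0,1]` has constant sign. -/
lemma sign_const_aux (f : ℝ → ℝ) (hf : ContinuousOn f (Icc 0 1))
    (hf0 : ∀ x ∈ Icc (0:ℝ) 1, f x ≠ 0) :
    (∀ x ∈ Icc (0:ℝ) 1, 0 < f x) ∨ (∀ x ∈ Icc (0:ℝ) 1, f x < 0) := by
  by_contra h
  push_neg at h
  obtain ⟨⟨x, hx, hxle⟩, ⟨y, hy, hyle⟩⟩ := h
  have hsub : uIcc x y ⊆ Icc (0:ℝ) 1 := uIcc_subset_Icc hx hy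
  have : (0:ℝ) ∈ uIcc (f x) (f y) := by
    rw [mem_uIcc]; left; exact ⟨hxle, hyle⟩
  obtain ⟨z, hz, hz0⟩ := intermediate_value_uIcc (hf.mono hsub) this
  exact hf0 z (hsub hz) hz0

/-- Key lemma: a periodic solution of `J' = -a J + g` with `g > 0` on `[0,1]` and `a`
continuous does not change sign. -/
lemma aux_key (a g J : ℝ → ℝ) (ha : ContinuousOn a (Icc 0 1))
    (hg : ∀ x ∈ Icc (0:ℝ) 1, 0 < g x)
    (hJ : ∀ x ∈ Icc (0:ℝ) 1, HasDerivAt J (-(a x) * J x + g x) x)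
    (hper : J 0 = J 1) :
    (∀ x ∈ Icc (0:ℝ) 1, 0 ≤ J x) ∨ (∀ x ∈ Icc (0:ℝ) 1, J x ≤ 0) := by
  set A : ℝ → ℝ := fun x => ∫ t in (0:ℝ)..x, a t with hA
  set F : ℝ → ℝ := fun x => Real.exp (A x) * J x with hF
  have hIcc : uIcc (0:ℝ) 1 = Icc 0 1 := uIcc_of_le zero_le_one
  have hAcont : ContinuousOn A (Icc 0 1) := by
    have := intervalIntegral.continuousOn_primitive_interval
      (f := a) (μ := volume) (a := 0) (b := 1)
      (by rw [hIcc]; exact ha.integrableOn_Icc)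
    rwa [hIcc] at this
  have hJcont : ContinuousOn J (Icc 0 1) := fun x hx =>
    ((hJ x hx).continuousAt).continuousWithinAt
  have hFcont : ContinuousOn F (Icc 0 1) :=
    (Real.continuous_exp.comp_continuousOn hAcont).mul hJcont
  have hFderiv : ∀ x ∈ Ioo (0:ℝ) 1, HasDerivAt F (Real.exp (A x) * g x) x := by
    intro x hx
    have hxm : x ∈ Icc (0:ℝ) 1 := Ioo_subset_Icc_self hx
    have hnh : Icc (0:ℝ) 1 ∈ nhds x := Icc_mem_nhds hx.1 hx.2
    have hca : ContinuousAt a x := (ha x hxm).continuousAt hnh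
    have hint : IntervalIntegrable a volume 0 x := by
      apply ContinuousOn.intervalIntegrable
      apply ha.mono
      rw [uIcc_of_le hxm.1]
      exact Icc_subset_Icc le_rfl hxm.2
    have hmeas : StronglyMeasurableAtFilter a (nhds x) volume :=
      ((ha.mono Ioo_subset_Icc_self).stronglyMeasurableAtFilter isOpen_Ioo x hx)
    have hAd : HasDerivAt A (a x) x :=
      intervalIntegral.integral_hasDerivAt_right hint hmeas hca
    have := (hAd.exp.fun_mul (hJ x hxm))
    exact this.congr_deriv (by ring)
  have hmono : StrictMonoOn F (Icc 0 1) := by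
    apply strictMonoOn_of_deriv_pos (convex_Icc 0 1) hFcont
    intro x hx
    rw [interior_Icc] at hx
    rw [(hFderiv x hx).deriv]
    exact mul_pos (Real.exp_pos _) (hg x (Ioo_subset_Icc_self hx))
  have hA0 : A 0 = 0 := intervalIntegral.integral_same
  have hF0 : F 0 = J 0 := by simp [hF, hA0]
  have hF1 : F 1 = Real.exp (A 1) * J 0 := by simp [hF, hper]
  rcases le_or_gt 0 (J 0) with h0 | h0
  · left
    intro x hx
    rcases hx.1.eq_or_lt with h | h
    · rw [← h]; exact h0
    · have h1 : F 0 < F x := hmono (left_mem_Icc.2 zero_le_one) hx h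
      rw [hF0] at h1
      have h2 : 0 < Real.exp (A x) * J x := lt_of_le_of_lt h0 h1
      nlinarith [Real.exp_pos (A x)]
  · right
    intro x hx
    rcases hx.2.eq_or_lt with h | h
    · rw [h, ← hper]; exact h0.le
    · have h1 : F x < F 1 := hmono hx (right_mem_Icc.2 zero_le_one) h
      rw [hF1] at h1
      have h2 : Real.exp (A x) * J x < 0 :=
        lt_of_lt_of_le h1 (mul_nonpos_of_nonneg_of_nonpos (Real.exp_pos _).le h0.le)
      nlinarith [Real.exp_pos (A x)]

/-- A periodic solution of `J₁' = -(b₁⁻¹ + b₂⁻¹) J₁ + b₂⁻¹ c` (with `c ≠ 0` and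
`b₁, b₂` continuous, nowhere vanishing on `[0,1]`) does not change sign on `[0,1]`. -/
theorem stmt5 (b₁ b₂ : ℝ → ℝ)
    (hb₁ : ContinuousOn b₁ (Icc 0 1)) (hb₂ : ContinuousOn b₂ (Icc 0 1))
    (hb₁0 : ∀ x ∈ Icc (0:ℝ) 1, b₁ x ≠ 0) (hb₂0 : ∀ x ∈ Icc (0:ℝ) 1, b₂ x ≠ 0)
    (c : ℝ) (hc : c ≠ 0) (J₁ : ℝ → ℝ)
    (hJ : ∀ x ∈ Icc (0:ℝ) 1,
      HasDerivAt J₁ (-((b₁ x)⁻¹ + (b₂ x)⁻¹) * J₁ x + (b₂ x)⁻¹ * c) x)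
    (hper : J₁ 0 = J₁ 1) :
    (∀ x ∈ Icc (0:ℝ) 1, 0 ≤ J₁ x) ∨ (∀ x ∈ Icc (0:ℝ) 1, J₁ x ≤ 0) := by
  set a : ℝ → ℝ := fun x => (b₁ x)⁻¹ + (b₂ x)⁻¹ with ha_def
  set g : ℝ → ℝ := fun x => (b₂ x)⁻¹ * c with hg_def
  have ha : ContinuousOn a (Icc 0 1) := (hb₁.inv₀ hb₁0).add (hb₂.inv₀ hb₂0)
  have hgc : ContinuousOn g (Icc 0 1) := (hb₂.inv₀ hb₂0).mul continuousOn_const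
  have hg0 : ∀ x ∈ Icc (0:ℝ) 1, g x ≠ 0 := fun x hx =>
    mul_ne_zero (inv_ne_zero (hb₂0 x hx)) hc
  rcases sign_const_aux g hgc hg0 with hgpos | hgneg
  · exact aux_key a g J₁ ha hgpos (fun x hx => hJ x hx) hper
  · have hJ' : ∀ x ∈ Icc (0:ℝ) 1,
        HasDerivAt (fun y => -J₁ y) (-(a x) * (-J₁ x) + (-g x)) x := by
      intro x hx
      have := (hJ x hx).fun_neg
      exact this.congr_deriv (by ring)
    have := aux_key a (fun x => -g x) (fun y => -J₁ y) ha
      (fun x hx => by simpa using hgneg x hx) hJ' (by simp [hper])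
    rcases this with h | h
    · right; intro x hx; simpa using h x hx
    · left; intro x hx; simpa using h x hx
end

section
/- Let b₁, b₂ : [0,1] → ℝ be continuous and nowhere vanishing, and let J₁ : [0,1] → ℝ be a C¹ solution of J₁'(x) = -(b₁(x)⁻¹ + b₂(x)⁻¹) J₁(x) + b₂(x)⁻¹ c with c ≠ 0 and J₁(0) = 0. Then J₁(1) ≠ 0. -/
open Filter MeasureTheory Set

/-- If `J₁' = -(b₁⁻¹ + b₂⁻¹) J₁ + b₂⁻¹ c` on `[0,1]` with `c ≠ 0`, `b₁, b₂` continuous and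
nowhere vanishing, and `J₁(0) = 0`, then `J₁(1) ≠ 0`. -/
theorem stmt6 (b₁ b₂ : ℝ → ℝ)
    (hb₁ : ContinuousOn b₁ (Icc 0 1)) (hb₂ : ContinuousOn b₂ (Icc 0 1))
    (hb₁0 : ∀ x ∈ Icc (0:ℝ) 1, b₁ x ≠ 0) (hb₂0 : ∀ x ∈ Icc (0:ℝ) 1, b₂ x ≠ 0)
    (c : ℝ) (hc : c ≠ 0) (J₁ : ℝ → ℝ)
    (hJ : ∀ x ∈ Icc (0:ℝ) 1,
      HasDerivAt J₁ (-((b₁ x)⁻¹ + (b₂ x)⁻¹) * J₁ x + (b₂ x)⁻¹ * c) x)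
    (h0 : J₁ 0 = 0) :
    J₁ 1 ≠ 0 := by
  have huIcc : uIcc (0:ℝ) 1 = Icc 0 1 := uIcc_of_le (by norm_num)
  -- retraction onto Icc 0 1
  set pr : ℝ → ℝ := fun x => max 0 (min x 1) with hpr
  have hprc : Continuous pr := continuous_const.max (continuous_id.min continuous_const)
  have hprmem : ∀ x, pr x ∈ Icc (0:ℝ) 1 := by
    intro x
    exact ⟨le_max_left _ _, max_le (by norm_num) (min_le_right _ _)⟩
  have hpreq : ∀ x ∈ Icc (0:ℝ) 1, pr x = x := by
    intro x hx
    simp [hpr, min_eq_left hx.2, max_eq_right hx.1]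
  -- continuous extension of b₁⁻¹ + b₂⁻¹
  set g : ℝ → ℝ := fun x => (b₁ (pr x))⁻¹ + (b₂ (pr x))⁻¹ with hg
  have hgc : Continuous g := by
    have h1 : Continuous fun x => b₁ (pr x) := hb₁.comp_continuous hprc hprmem
    have h2 : Continuous fun x => b₂ (pr x) := hb₂.comp_continuous hprc hprmem
    exact (h1.inv₀ fun x => hb₁0 _ (hprmem x)).add (h2.inv₀ fun x => hb₂0 _ (hprmem x))
  set A : ℝ → ℝ := fun x => ∫ t in (0:ℝ)..x, g t with hA
  have hAderiv : ∀ x : ℝ, HasDerivAt A (g x) x := fun x =>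
    intervalIntegral.integral_hasDerivAt_right (hgc.intervalIntegrable _ _)
      (hgc.stronglyMeasurableAtFilter _ _) hgc.continuousAt
  have hAc : Continuous A :=
    continuous_iff_continuousAt.mpr fun x => ((hAderiv x).differentiableAt).continuousAt
  -- the transformed function
  set k : ℝ → ℝ := fun x => Real.exp (A x) * (b₂ x)⁻¹ with hk
  have hkcont : ContinuousOn k (Icc 0 1) :=
    ((Real.continuous_exp.comp hAc).continuousOn).mul (hb₂.inv₀ hb₂0)
  have hkint : IntervalIntegrable k volume 0 1 :=
    (huIcc ▸ hkcont).intervalIntegrable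
  have hkcint : IntervalIntegrable (fun x => k x * c) volume 0 1 := hkint.mul_const c
  set F : ℝ → ℝ := fun x => Real.exp (A x) * J₁ x with hF
  have hFderiv : ∀ x ∈ uIcc (0:ℝ) 1, HasDerivAt F (k x * c) x := by
    intro x hx
    rw [huIcc] at hx
    have hA' : HasDerivAt (fun y => Real.exp (A y)) (Real.exp (A x) * g x) x :=
      (Real.hasDerivAt_exp (A x)).comp x (hAderiv x)
    have := hA'.mul (hJ x hx)
    refine HasDerivAt.congr_deriv (f := F) this ?_
    have hgx : g x = (b₁ x)⁻¹ + (b₂ x)⁻¹ := by rw [hg]; simp only [hpreq x hx]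
    rw [hk, hgx]
    ring
  have hFTC : ∫ y in (0:ℝ)..1, k y * c = F 1 - F 0 :=
    intervalIntegral.integral_eq_sub_of_hasDerivAt hFderiv hkcint
  -- sign of b₂ is constant
  have hconst : (∀ x ∈ Icc (0:ℝ) 1, 0 < b₂ x) ∨ (∀ x ∈ Icc (0:ℝ) 1, b₂ x < 0) := by
    rcases (hb₂0 0 (by norm_num)).lt_or_gt with hneg | hpos
    · right
      intro x hx
      by_contra hle
      push_neg at hle
      have hxpos : 0 < b₂ x := (hb₂0 x hx).lt_or_gt.resolve_left (not_lt.mpr hle)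
      have : (0:ℝ) ∈ b₂ '' Icc 0 x := by
        apply intermediate_value_Icc hx.1 (hb₂.mono (Icc_subset_Icc le_rfl hx.2))
        exact ⟨hneg.le, hxpos.le⟩
      obtain ⟨y, hy, hy0⟩ := this
      exact hb₂0 y (Icc_subset_Icc le_rfl hx.2 hy) hy0
    · left
      intro x hx
      by_contra hle
      push_neg at hle
      have hxneg : b₂ x < 0 := (hb₂0 x hx).lt_or_gt.resolve_right (not_lt.mpr hle)
      have : (0:ℝ) ∈ b₂ '' Icc 0 x := by
        apply intermediate_value_Icc' hx.1 (hb₂.mono (Icc_subset_Icc le_rfl hx.2))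
        exact ⟨hxneg.le, hpos.le⟩
      obtain ⟨y, hy, hy0⟩ := this
      exact hb₂0 y (Icc_subset_Icc le_rfl hx.2 hy) hy0
  -- the integral of k is nonzero
  have hint_ne : (∫ y in (0:ℝ)..1, k y) ≠ 0 := by
    rcases hconst with hpos | hneg
    · have : 0 < ∫ y in (0:ℝ)..1, k y := by
        apply intervalIntegral.intervalIntegral_pos_of_pos_on hkint _ (by norm_num)
        intro x hx
        have hx' : x ∈ Icc (0:ℝ) 1 := ⟨hx.1.le, hx.2.le⟩
        exact mul_pos (Real.exp_pos _) (inv_pos.mpr (hpos x hx'))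
      exact this.ne'
    · have : 0 < ∫ y in (0:ℝ)..1, -k y := by
        apply intervalIntegral.intervalIntegral_pos_of_pos_on hkint.neg _ (by norm_num)
        intro x hx
        have hx' : x ∈ Icc (0:ℝ) 1 := ⟨hx.1.le, hx.2.le⟩
        have hbx : (b₂ x)⁻¹ < 0 := inv_neg''.mpr (hneg x hx')
        simp only [Pi.neg_apply, hk]
        nlinarith [Real.exp_pos (A x)]
      rw [intervalIntegral.integral_neg] at this
      linarith
  have hintc : (∫ y in (0:ℝ)..1, k y * c) ≠ 0 := by
    rw [intervalIntegral.integral_mul_const]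
    exact mul_ne_zero hint_ne hc
  rw [hFTC] at hintc
  have hF0 : F 0 = 0 := by simp [hF, h0]
  rw [hF0, sub_zero] at hintc
  intro h1
  apply hintc
  show F 1 = 0
  simp [hF, h1]
end
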